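/- Let R be a commutative ring and let 0 → R^a →α R^{a+l} →β M → 0 be an exact sequence of R-modules. Let Ψ : ⋀^l_R M → ⋀^{a+l}_R R^{a+l} be the unique R-linear map with Ψ(β(y₁) ∧ ⋯ ∧ β(y_l)) = α(e₁) ∧ ⋯ ∧ α(e_a) ∧ y₁ ∧ ⋯ ∧ y_l for all y₁, …, y_l ∈ R^{a+l} (e₁, …, e_a the standard basis of R^a). Under the R-module isomorphism ⋀^{a+l}_R R^{a+l} ≅ R sending e₁ ∧ ⋯ ∧ e_{a+l} to 1, the image of Ψ equals the ideal of R generated by all a×a minors of the matrix of α with respect to the standard bases. -/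

import Mathlib

open Function
open scoped Matrix

section Aux

variable {R : Type*} [CommRing R]

theorem aux_append_elim {α : Type*} {m n : ℕ} (u : Fin m → α) (v : Fin n → α) :
    Fin.append u v = Sum.elim u v ∘ ⇑finSumFinEquiv.symm := by
  funext i
  obtain ⟨s, rfl⟩ := finSumFinEquiv.surjective i
  cases s with
  | inl i => simp [finSumFinEquiv_apply_left, Fin.append_left]
  | inr i => simp [finSumFinEquiv_apply_right, Fin.append_right]

/-- The determinant of the matrix with rows `u` (fixed) followed by `y`, as a multilinear
map in `y`. -/
noncomputable def auxPhi (R : Type*) [CommRing R] {m n : ℕ} (u : Fin m → (Fin (m + n) → R)) :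
    MultilinearMap R (fun _ : Fin n => (Fin (m + n) → R)) R :=
  (((Matrix.detRowAlternating (R := R) (n := Fin (m + n))).toMultilinearMap.domDomCongr
    finSumFinEquiv.symm).currySum) u

theorem auxPhi_apply {m n : ℕ} (u : Fin m → (Fin (m + n) → R)) (y : Fin n → (Fin (m + n) → R)) :
    auxPhi R u y = Matrix.det (Matrix.of (Fin.append u y)) := by
  rw [aux_append_elim]
  rfl

theorem aux_exists_equiv {m n N : ℕ} (h : m + n = N) (f : Fin m → Fin N)
    (hf : Function.Injective f) :
    ∃ ee : Fin m ⊕ Fin n ≃ Fin N, ∀ i, ee (Sum.inl i) = f i := by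
  classical
  have hc : Fintype.card ((Set.range f)ᶜ : Set (Fin N)) = n := by
    rw [Fintype.card_compl_set, Set.card_range_of_injective hf, Fintype.card_fin,
      Fintype.card_fin]
    omega
  refine ⟨(Equiv.sumCongr (Equiv.ofInjective f hf) (Fintype.equivFinOfCardEq hc).symm).trans
    (Equiv.Set.sumCompl (Set.range f)), fun i => by simp⟩

theorem aux_key {m n : ℕ} (A : Matrix (Fin (m + n)) (Fin m) R)
    (ee : Fin m ⊕ Fin n ≃ Fin (m + n)) :
    Matrix.det (Matrix.of (Fin.append (fun i r => A r i)
        (fun j => Pi.single (ee (Sum.inr j)) (1 : R)))) =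
      ((Equiv.Perm.sign (ee.trans finSumFinEquiv.symm) : ℤ) : R) *
        Matrix.det (A.submatrix (fun i => ee (Sum.inl i)) id) := by
  classical
  set C : Matrix (Fin (m + n)) (Fin (m + n)) R :=
    Matrix.of (Fin.append (fun i r => A r i) (fun j => Pi.single (ee (Sum.inr j)) (1 : R))) with hC
  set s : R := ((Equiv.Perm.sign (ee.trans finSumFinEquiv.symm) : ℤ) : R) with hs
  have hD : C.submatrix (⇑finSumFinEquiv) (⇑ee) =
      Matrix.fromBlocks ((A.submatrix (fun i => ee (Sum.inl i)) id)ᵀ)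
        ((A.submatrix (fun j => ee (Sum.inr j)) id)ᵀ) 0 1 := by
    ext st t
    cases st with
    | inl i =>
      cases t with
      | inl i' =>
        simp [hC, Matrix.submatrix_apply, finSumFinEquiv_apply_left, Fin.append_left]
      | inr j =>
        simp [hC, Matrix.submatrix_apply, finSumFinEquiv_apply_left, Fin.append_left]
    | inr j =>
      cases t with
      | inl i' =>
        have hne : ee (Sum.inl i') ≠ ee (Sum.inr j) := by
          simp [ee.injective.eq_iff]
        simp [hC, Matrix.submatrix_apply, finSumFinEquiv_apply_right, Fin.append_right,
          Pi.single_apply, hne]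
      | inr j' =>
        simp [hC, Matrix.submatrix_apply, finSumFinEquiv_apply_right, Fin.append_right,
          Pi.single_apply, Matrix.one_apply, ee.injective.eq_iff, eq_comm]
  have h1 : Matrix.det (C.submatrix (⇑finSumFinEquiv) (⇑ee)) =
      Matrix.det (A.submatrix (fun i => ee (Sum.inl i)) id) := by
    rw [hD, Matrix.det_fromBlocks_zero₂₁, Matrix.det_transpose, Matrix.det_one, mul_one]
  have h2 : C.submatrix (⇑finSumFinEquiv) (⇑ee) =
      (C.submatrix (⇑finSumFinEquiv) (⇑finSumFinEquiv)).submatrix id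
        (⇑(ee.trans finSumFinEquiv.symm)) := by
    rw [Matrix.submatrix_submatrix]
    ext st t
    simp
  have h3 : Matrix.det (C.submatrix (⇑finSumFinEquiv) (⇑ee)) = s * Matrix.det C := by
    rw [h2, Matrix.det_permute', Matrix.det_submatrix_equiv_self]
  have hss : s * s = 1 := by
    rw [hs, ← Int.cast_mul, ← Units.val_mul, ← pow_two, Int.units_sq, Units.val_one,
      Int.cast_one]
  have : s * Matrix.det C = Matrix.det (A.submatrix (fun i => ee (Sum.inl i)) id) := by
    rw [← h3, h1]
  calc Matrix.det C = (s * s) * Matrix.det C := by rw [hss, one_mul]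
    _ = s * (s * Matrix.det C) := by ring
    _ = s * Matrix.det (A.submatrix (fun i => ee (Sum.inl i)) id) := by rw [this]

end Aux

/-- The wedge product of `n` elements of `M`, as an element of the `n`-th exterior power
`⋀[R]^n M`. -/
noncomputable def wedge (R : Type*) [CommRing R] {M : Type*} [AddCommGroup M] [Module R M]
    (n : ℕ) (v : Fin n → M) : ⋀[R]^n M :=
  ⟨ExteriorAlgebra.ιMulti R n v, ExteriorAlgebra.ιMulti_range R n (Set.mem_range_self v)⟩

/-- Under the isomorphism `⋀^{a+l} R^{a+l} ≅ R` sending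
`e₁ ∧ ⋯ ∧ e_{a+l}` to `1`, the image of `Ψ` is the ideal generated by the `a × a` minors of
the matrix of `α`. -/
theorem range_wedge_lift_eq_minors
    (R : Type*) [CommRing R] (a l : ℕ)
    (M : Type*) [AddCommGroup M] [Module R M]
    (α : (Fin a → R) →ₗ[R] (Fin (a + l) → R)) (β : (Fin (a + l) → R) →ₗ[R] M)
    (hα : Function.Injective α) (hαβ : Function.Exact α β) (hβ : Function.Surjective β)
    (Ψ : (⋀[R]^l M) →ₗ[R] (⋀[R]^(a + l) (Fin (a + l) → R)))
    (hΨ : ∀ y : Fin l → (Fin (a + l) → R),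
      Ψ (wedge R l (fun i => β (y i))) =
        wedge R (a + l) (Fin.append (fun i : Fin a => α (Pi.single i 1)) y))
    (θ : (⋀[R]^(a + l) (Fin (a + l) → R)) ≃ₗ[R] R)
    (hθ : θ (wedge R (a + l) (fun i => Pi.single i 1)) = 1) :
    Submodule.map (θ : (⋀[R]^(a + l) (Fin (a + l) → R)) →ₗ[R] R) (LinearMap.range Ψ) =
      Ideal.span { x : R | ∃ σ : Fin a ↪ Fin (a + l),
        x = ((LinearMap.toMatrix' α).submatrix (⇑σ) id).det } := by
  classical
  set S : Set R := { x : R | ∃ σ : Fin a ↪ Fin (a + l),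
    x = ((LinearMap.toMatrix' α).submatrix (⇑σ) id).det } with hS
  set αe : Fin a → (Fin (a + l) → R) := fun i => α (Pi.single i 1) with hαedef
  have hαe : αe = fun i r => (LinearMap.toMatrix' α) r i := by
    funext i r
    have h1 : (Pi.single i (1 : R) : Fin a → R) = fun j' => if j' = i then 1 else 0 := by
      funext j'
      simp [Pi.single_apply]
    show α (Pi.single i 1) r = LinearMap.toMatrix' α r i
    rw [LinearMap.toMatrix'_apply, h1]
  -- `θ` computes the determinant.
  set W : ((Fin (a + l) → R) [⋀^Fin (a + l)]→ₗ[R] (⋀[R]^(a + l) (Fin (a + l) → R))) :=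
    (ExteriorAlgebra.ιMulti R (a + l)).codRestrict (⋀[R]^(a + l) (Fin (a + l) → R))
      (fun v => ExteriorAlgebra.ιMulti_range R (a + l) (Set.mem_range_self v)) with hWdef
  have hW : ∀ v, W v = wedge R (a + l) v := fun v => rfl
  set F : ((Fin (a + l) → R) [⋀^Fin (a + l)]→ₗ[R] R) :=
    (θ : (⋀[R]^(a + l) (Fin (a + l) → R)) →ₗ[R] R).compAlternatingMap W with hFdef
  have hFb : F = (Pi.basisFun R (Fin (a + l))).det := by
    rw [F.eq_smul_basis_det (Pi.basisFun R (Fin (a + l)))]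
    have h1 : F ⇑(Pi.basisFun R (Fin (a + l))) = 1 := by
      have h2 : ⇑(Pi.basisFun R (Fin (a + l))) = fun i : Fin (a + l) => Pi.single i (1 : R) :=
        funext fun i => Pi.basisFun_apply R (Fin (a + l)) i
      rw [hFdef, LinearMap.compAlternatingMap_apply, hW, h2]
      exact hθ
    rw [h1, one_smul]
  have hwedge : ∀ v : Fin (a + l) → (Fin (a + l) → R),
      θ (wedge R (a + l) v) = Matrix.det (Matrix.of v) := by
    intro v
    have h1 : θ (wedge R (a + l) v) = F v := rfl
    rw [h1, hFb, Module.Basis.det_apply]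
    have h2 : (Pi.basisFun R (Fin (a + l))).toMatrix v = (Matrix.of v)ᵀ := by
      ext i j
      rw [Module.Basis.toMatrix_apply, Pi.basisFun_repr]
      rfl
    rw [h2, Matrix.det_transpose]
  -- the spanning of the exterior power by wedges
  have hspan : Submodule.span R (Set.range (wedge R l (M := M))) = ⊤ := by
    apply Submodule.map_injective_of_injective (Submodule.injective_subtype (⋀[R]^l M))
    rw [Submodule.map_span, Submodule.map_top, Submodule.range_subtype, ← Set.range_comp]
    have h1 : (⋀[R]^l M).subtype ∘ (wedge R l) = ⇑(ExteriorAlgebra.ιMulti R l (M := M)) := rfl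
    rw [h1, ExteriorAlgebra.ιMulti_span_fixedDegree]
  -- membership of all the relevant determinants in the span of the minors
  have hmem : ∀ y : Fin l → (Fin (a + l) → R),
      Matrix.det (Matrix.of (Fin.append αe y)) ∈ Ideal.span S := by
    intro y
    rw [← auxPhi_apply]
    have hy : y = fun j => ∑ i, y j i • (Pi.single i (1 : R) : Fin (a + l) → R) := by
      funext j
      have h1 : ∀ i : Fin (a + l),
          y j i • (Pi.single i (1 : R) : Fin (a + l) → R) = Pi.single i (y j i) := by
        intro i
        rw [← Pi.single_smul, smul_eq_mul, mul_one]
      simp_rw [h1]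
      rw [Finset.univ_sum_single]
    rw [hy, MultilinearMap.map_sum]
    apply Submodule.sum_mem
    intro r _
    rw [MultilinearMap.map_smul_univ]
    apply Submodule.smul_mem
    by_cases hr : Function.Injective r
    · obtain ⟨ee', hee'⟩ := aux_exists_equiv (show l + a = a + l by omega) r hr
      set ee : Fin a ⊕ Fin l ≃ Fin (a + l) := (Equiv.sumComm (Fin a) (Fin l)).trans ee'
        with heedef
      have heer : (fun j => (Pi.single (r j) (1 : R) : Fin (a + l) → R)) =
          fun j => (Pi.single (ee (Sum.inr j)) (1 : R) : Fin (a + l) → R) := by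
        funext j
        simp [heedef, hee' j]
      rw [auxPhi_apply, heer, hαe, aux_key]
      exact Ideal.mul_mem_left _ _ (Ideal.subset_span
        ⟨⟨fun i => ee (Sum.inl i), ee.injective.comp Sum.inl_injective⟩, rfl⟩)
    · rw [auxPhi_apply]
      obtain ⟨j₁, j₂, hne, hji⟩ := Function.not_injective_iff.mp hr
      have h0 : Matrix.det (Matrix.of (Fin.append αe (fun j => Pi.single (r j) (1 : R)))) = 0 := by
        refine Matrix.detRowAlternating.map_eq_zero_of_eq _
          (i := Fin.natAdd a j₁) (j := Fin.natAdd a j₂) ?_ ?_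
        · show Fin.append αe (fun j => Pi.single (r j) (1 : R)) (Fin.natAdd a j₁) =
            Fin.append αe (fun j => Pi.single (r j) (1 : R)) (Fin.natAdd a j₂)
          rw [Fin.append_right, Fin.append_right, hne]
        · intro h
          exact hji (by simpa [Fin.ext_iff] using h)
      rw [h0]
      exact Submodule.zero_mem _
  refine le_antisymm ?_ ?_
  · rw [Submodule.map_le_iff_le_comap, LinearMap.range_eq_map, ← hspan, Submodule.map_span,
      Submodule.span_le]
    rintro x ⟨-, ⟨v, rfl⟩, rfl⟩
    simp only [SetLike.mem_coe, Submodule.mem_comap, LinearEquiv.coe_coe]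
    set y : Fin l → (Fin (a + l) → R) := fun i => (hβ (v i)).choose with hydef
    have hv : v = fun i => β (y i) := funext fun i => ((hβ (v i)).choose_spec).symm
    rw [hv, hΨ y, hwedge]
    exact hmem y
  · rw [Ideal.span_le]
    rintro x ⟨σ, rfl⟩
    obtain ⟨ee, hee⟩ := aux_exists_equiv rfl (⇑σ) σ.injective
    set y : Fin l → (Fin (a + l) → R) := fun j => Pi.single (ee (Sum.inr j)) 1 with hydef
    set s : R := ((Equiv.Perm.sign (ee.trans finSumFinEquiv.symm) : ℤ) : R) with hsdef
    have h1 : θ (Ψ (wedge R l (fun i => β (y i)))) =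
        s * Matrix.det ((LinearMap.toMatrix' α).submatrix (⇑σ) id) := by
      rw [hΨ y, hwedge]
      have h2 : Fin.append (fun i : Fin a => (α (Pi.single i 1) : Fin (a + l) → R)) y =
          Fin.append (fun i (r : Fin (a + l)) => (LinearMap.toMatrix' α) r i) y := by
        rw [← hαedef, hαe]
      have h4 : (fun i => ee (Sum.inl i)) = ⇑σ := funext hee
      rw [h2, hydef, aux_key, h4]
    have hss : s * s = 1 := by
      rw [hsdef, ← Int.cast_mul, ← Units.val_mul, ← pow_two, Int.units_sq, Units.val_one,
        Int.cast_one]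
    have h3 : Matrix.det ((LinearMap.toMatrix' α).submatrix (⇑σ) id) =
        s • θ (Ψ (wedge R l (fun i => β (y i)))) := by
      rw [h1, smul_eq_mul, ← mul_assoc, hss, one_mul]
    rw [SetLike.mem_coe, h3]
    exact Submodule.smul_mem _ _
      (Submodule.mem_map_of_mem (LinearMap.mem_range_self _ _))
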